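/- Let n ≥ 1. For g ∈ GL(n+1, ℂ) written in blocks g = (A b; c d) with A an n×n complex matrix, b ∈ ℂⁿ a column, c a row vector of length n, and d ∈ ℂ, and for z ∈ ℂⁿ with c·z + d ≠ 0, define g·z := (c·z + d)⁻¹ (A z + b), and define the (n+1)×(n+1) matrix b(g,z) := (fromBlocks I (−(g·z)) 0 1) * g * (fromBlocks I z 0 1), where fromBlocks I w 0 1 denotes the block unitriangular matrix with upper-right block the column w. Then: (i) the upper-right block of b(g,z) is zero; in fact b(g,z) = fromBlocks (A − (g·z) c) 0 c (c·z + d); and (ii) the multiplier identity holds: for g, h ∈ GL(n+1,ℂ) and z ∈ ℂⁿ with c_h·z + d_h ≠ 0 and c_g·(h·z) + d_g ≠ 0, one has b(gh, z) = b(g, h·z) * b(h, z). -/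

import Mathlib

open Matrix

noncomputable section

/-- The upper-left `n × n` block `A` of an `(n+1) × (n+1)` matrix `g = (A b; c d)`. -/
def Ablk {n : ℕ} (g : Matrix (Fin n ⊕ Unit) (Fin n ⊕ Unit) ℂ) : Matrix (Fin n) (Fin n) ℂ :=
  g.toBlocks₁₁

/-- The upper-right column `b` of `g = (A b; c d)`. -/
def bcol {n : ℕ} (g : Matrix (Fin n ⊕ Unit) (Fin n ⊕ Unit) ℂ) : Fin n → ℂ :=
  fun i => g (Sum.inl i) (Sum.inr ())

/-- The lower-left row `c` of `g = (A b; c d)`. -/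
def crow {n : ℕ} (g : Matrix (Fin n ⊕ Unit) (Fin n ⊕ Unit) ℂ) : Fin n → ℂ :=
  fun j => g (Sum.inr ()) (Sum.inl j)

/-- The lower-right scalar `d` of `g = (A b; c d)`. -/
def dent {n : ℕ} (g : Matrix (Fin n ⊕ Unit) (Fin n ⊕ Unit) ℂ) : ℂ :=
  g (Sum.inr ()) (Sum.inr ())

/-- The denominator `c·z + d` of the Möbius action of `g = (A b; c d)` at `z ∈ ℂⁿ`. -/
def den {n : ℕ} (g : Matrix (Fin n ⊕ Unit) (Fin n ⊕ Unit) ℂ) (z : Fin n → ℂ) : ℂ :=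
  crow g ⬝ᵥ z + dent g

/-- The Möbius action `g·z = (c·z + d)⁻¹ (A z + b)` of `g = (A b; c d)` on `z ∈ ℂⁿ`. -/
noncomputable def mact {n : ℕ} (g : Matrix (Fin n ⊕ Unit) (Fin n ⊕ Unit) ℂ)
    (z : Fin n → ℂ) : Fin n → ℂ :=
  (den g z)⁻¹ • (Ablk g *ᵥ z + bcol g)

/-- A vector `v ∈ ℂⁿ` as an `n × 1` column matrix. -/
def colm {n : ℕ} (v : Fin n → ℂ) : Matrix (Fin n) Unit ℂ := Matrix.of fun i _ => v i

/-- A vector `v ∈ ℂⁿ` as a `1 × n` row matrix. -/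
def rowm {n : ℕ} (v : Fin n → ℂ) : Matrix Unit (Fin n) ℂ := Matrix.of fun _ j => v j

/-- A scalar `a ∈ ℂ` as a `1 × 1` matrix. -/
def sclm (a : ℂ) : Matrix Unit Unit ℂ := Matrix.of fun _ _ => a

/-- The block unitriangular matrix `E w = (I w; 0 1)`. -/
def Emat {n : ℕ} (w : Fin n → ℂ) : Matrix (Fin n ⊕ Unit) (Fin n ⊕ Unit) ℂ :=
  fromBlocks 1 (colm w) 0 1

/-- The canonical automorphy factor `b(g,z) = E(-(g·z)) * g * E(z)`. -/
def bmat {n : ℕ} (g : Matrix (Fin n ⊕ Unit) (Fin n ⊕ Unit) ℂ) (z : Fin n → ℂ) :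
    Matrix (Fin n ⊕ Unit) (Fin n ⊕ Unit) ℂ :=
  Emat (-(mact g z)) * g * Emat z

/-- The numerator `A z + b` of the Möbius action. -/
def numv {n : ℕ} (g : Matrix (Fin n ⊕ Unit) (Fin n ⊕ Unit) ℂ) (z : Fin n → ℂ) : Fin n → ℂ :=
  Ablk g *ᵥ z + bcol g

lemma blocks_eq {n : ℕ} (g : Matrix (Fin n ⊕ Unit) (Fin n ⊕ Unit) ℂ) :
    g = fromBlocks (Ablk g) (colm (bcol g)) (rowm (crow g)) (sclm (dent g)) := by
  ext (i | i) (j | j) <;> rfl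

lemma mulE {n : ℕ} (g : Matrix (Fin n ⊕ Unit) (Fin n ⊕ Unit) ℂ) (z : Fin n → ℂ) :
    g * Emat z = fromBlocks (Ablk g) (colm (numv g z)) (rowm (crow g)) (sclm (den g z)) := by
  conv_lhs => rw [blocks_eq g]
  rw [Emat, fromBlocks_multiply]
  have h12 : Ablk g * colm z + colm (bcol g) * (1 : Matrix Unit Unit ℂ) = colm (numv g z) := by
    ext i ⟨⟩
    simp [Matrix.mul_apply, colm, numv, mulVec, dotProduct]
  have h22 : rowm (crow g) * colm z + sclm (dent g) * (1 : Matrix Unit Unit ℂ)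
      = sclm (den g z) := by
    ext ⟨⟩ ⟨⟩
    simp [Matrix.mul_apply, rowm, colm, sclm, den, dent, crow, dotProduct]
  rw [h12, h22]
  simp

lemma EmulE {n : ℕ} (w w' : Fin n → ℂ) : Emat w * Emat w' = Emat (w + w') := by
  rw [Emat, Emat, Emat, fromBlocks_multiply]
  have h12 : (1 : Matrix (Fin n) (Fin n) ℂ) * colm w' + colm w * (1 : Matrix Unit Unit ℂ)
      = colm (w + w') := by
    ext i ⟨⟩
    simp [colm, add_comm]
  rw [h12]
  simp

lemma Emat_zero {n : ℕ} : Emat (0 : Fin n → ℂ) = 1 := by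
  have : colm (0 : Fin n → ℂ) = 0 := by ext i ⟨⟩; simp [colm]
  rw [Emat, this, ← fromBlocks_one]

lemma numv_mul {n : ℕ} (g h : Matrix (Fin n ⊕ Unit) (Fin n ⊕ Unit) ℂ) (z : Fin n → ℂ) :
    numv (g * h) z = Ablk g *ᵥ numv h z + den h z • bcol g := by
  have h1 : (g * h) * Emat z =
      fromBlocks (Ablk g * Ablk h + colm (bcol g) * rowm (crow h))
        (Ablk g * colm (numv h z) + colm (bcol g) * sclm (den h z))
        (rowm (crow g) * Ablk h + sclm (dent g) * rowm (crow h))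
        (rowm (crow g) * colm (numv h z) + sclm (dent g) * sclm (den h z)) := by
    rw [mul_assoc, mulE h]
    conv_lhs => rw [blocks_eq g]
    rw [fromBlocks_multiply]
  have h2 := (mulE (g * h) z).symm.trans h1
  have h3 := congrArg Matrix.toBlocks₁₂ h2
  simp only [toBlocks_fromBlocks₁₂] at h3
  funext i
  have := congrFun (congrFun h3 i) ()
  simpa [colm, sclm, Matrix.mul_apply, Matrix.add_apply, mulVec, dotProduct,
    Pi.add_apply, Pi.smul_apply, smul_eq_mul, mul_comm] using this

lemma den_mul {n : ℕ} (g h : Matrix (Fin n ⊕ Unit) (Fin n ⊕ Unit) ℂ) (z : Fin n → ℂ) :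
    den (g * h) z = crow g ⬝ᵥ numv h z + den h z * dent g := by
  have h1 : (g * h) * Emat z =
      fromBlocks (Ablk g * Ablk h + colm (bcol g) * rowm (crow h))
        (Ablk g * colm (numv h z) + colm (bcol g) * sclm (den h z))
        (rowm (crow g) * Ablk h + sclm (dent g) * rowm (crow h))
        (rowm (crow g) * colm (numv h z) + sclm (dent g) * sclm (den h z)) := by
    rw [mul_assoc, mulE h]
    conv_lhs => rw [blocks_eq g]
    rw [fromBlocks_multiply]
  have h2 := (mulE (g * h) z).symm.trans h1
  have h3 := congrArg Matrix.toBlocks₂₂ h2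
  simp only [toBlocks_fromBlocks₂₂] at h3
  have := congrFun (congrFun h3 ()) ()
  simpa [rowm, colm, sclm, Matrix.mul_apply, Matrix.add_apply, dotProduct,
    mul_comm] using this

lemma numv_eq {n : ℕ} (h : Matrix (Fin n ⊕ Unit) (Fin n ⊕ Unit) ℂ) (z : Fin n → ℂ)
    (hh : den h z ≠ 0) : numv h z = den h z • mact h z := by
  rw [mact, smul_smul, mul_inv_cancel₀ hh, one_smul, numv]

lemma den_cocycle {n : ℕ} (g h : Matrix (Fin n ⊕ Unit) (Fin n ⊕ Unit) ℂ) (z : Fin n → ℂ)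
    (hh : den h z ≠ 0) : den (g * h) z = den g (mact h z) * den h z := by
  rw [den_mul, numv_eq h z hh, dotProduct_smul]
  simp only [den, smul_eq_mul]
  ring

lemma mact_mul {n : ℕ} (g h : Matrix (Fin n ⊕ Unit) (Fin n ⊕ Unit) ℂ) (z : Fin n → ℂ)
    (hh : den h z ≠ 0) (hg : den g (mact h z) ≠ 0) :
    mact (g * h) z = mact g (mact h z) := by
  rw [mact, mact]
  rw [show Ablk (g * h) *ᵥ z + bcol (g * h) = numv (g * h) z from rfl]
  rw [show Ablk g *ᵥ mact h z + bcol g = numv g (mact h z) from rfl]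
  rw [numv_mul, numv_eq h z hh, den_cocycle g h z hh]
  rw [mulVec_smul]
  rw [show den h z • (Ablk g *ᵥ mact h z) + den h z • bcol g
      = den h z • numv g (mact h z) by rw [← smul_add]; rfl]
  rw [smul_smul]
  congr 1
  field_simp

/-- (i) `b(g,z)` is block lower triangular, equal to
`(A - (g·z)c  0; c  c·z+d)`; and (ii) the multiplier identity
`b(gh, z) = b(g, h·z) * b(h, z)` holds wherever everything is defined. -/
theorem bmat_eq_and_multiplier (n : ℕ) (hn : 1 ≤ n) :
    (∀ (g : GL (Fin n ⊕ Unit) ℂ) (z : Fin n → ℂ),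
      den (g : Matrix (Fin n ⊕ Unit) (Fin n ⊕ Unit) ℂ) z ≠ 0 →
        bmat (g : Matrix (Fin n ⊕ Unit) (Fin n ⊕ Unit) ℂ) z =
          fromBlocks
            (Ablk (g : Matrix (Fin n ⊕ Unit) (Fin n ⊕ Unit) ℂ) -
              vecMulVec (mact (g : Matrix (Fin n ⊕ Unit) (Fin n ⊕ Unit) ℂ) z)
                (crow (g : Matrix (Fin n ⊕ Unit) (Fin n ⊕ Unit) ℂ)))
            0
            (rowm (crow (g : Matrix (Fin n ⊕ Unit) (Fin n ⊕ Unit) ℂ)))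
            (sclm (den (g : Matrix (Fin n ⊕ Unit) (Fin n ⊕ Unit) ℂ) z))) ∧
    (∀ (g h : GL (Fin n ⊕ Unit) ℂ) (z : Fin n → ℂ),
      den (h : Matrix (Fin n ⊕ Unit) (Fin n ⊕ Unit) ℂ) z ≠ 0 →
      den (g : Matrix (Fin n ⊕ Unit) (Fin n ⊕ Unit) ℂ)
          (mact (h : Matrix (Fin n ⊕ Unit) (Fin n ⊕ Unit) ℂ) z) ≠ 0 →
        bmat ((g * h : GL (Fin n ⊕ Unit) ℂ) : Matrix (Fin n ⊕ Unit) (Fin n ⊕ Unit) ℂ) z =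
          bmat (g : Matrix (Fin n ⊕ Unit) (Fin n ⊕ Unit) ℂ)
              (mact (h : Matrix (Fin n ⊕ Unit) (Fin n ⊕ Unit) ℂ) z) *
            bmat (h : Matrix (Fin n ⊕ Unit) (Fin n ⊕ Unit) ℂ) z) := by
  constructor
  · intro g z hden
    set G : Matrix (Fin n ⊕ Unit) (Fin n ⊕ Unit) ℂ := (g : Matrix (Fin n ⊕ Unit) (Fin n ⊕ Unit) ℂ)
    set w := mact G z with hw
    have hnum : numv G z = den G z • w := numv_eq G z hden
    rw [bmat, mul_assoc, mulE, hnum, Emat, fromBlocks_multiply]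
    have h11 : (1 : Matrix (Fin n) (Fin n) ℂ) * Ablk G + colm (-w) * rowm (crow G)
        = Ablk G - vecMulVec (mact G z) (crow G) := by
      ext i j
      simp [Matrix.mul_apply, colm, rowm, vecMulVec, Matrix.sub_apply, ← hw, sub_eq_add_neg]
    have h12 : (1 : Matrix (Fin n) (Fin n) ℂ) * colm (den G z • w) + colm (-w) * sclm (den G z)
        = 0 := by
      ext i ⟨⟩
      simp [Matrix.mul_apply, colm, sclm, mul_comm]
    rw [h11, h12]
    simp
    rfl
  · intro g h z hh hg
    set G : Matrix (Fin n ⊕ Unit) (Fin n ⊕ Unit) ℂ := (g : Matrix (Fin n ⊕ Unit) (Fin n ⊕ Unit) ℂ)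
    set H : Matrix (Fin n ⊕ Unit) (Fin n ⊕ Unit) ℂ := (h : Matrix (Fin n ⊕ Unit) (Fin n ⊕ Unit) ℂ)
    have hcoe : ((g * h : GL (Fin n ⊕ Unit) ℂ) : Matrix (Fin n ⊕ Unit) (Fin n ⊕ Unit) ℂ)
        = G * H := rfl
    set w := mact H z with hw
    calc bmat ((g * h : GL (Fin n ⊕ Unit) ℂ) : Matrix (Fin n ⊕ Unit) (Fin n ⊕ Unit) ℂ) z
        = Emat (-(mact (G * H) z)) * (G * H) * Emat z := by rw [hcoe, bmat]
      _ = Emat (-(mact G w)) * G * (Emat w * Emat (-w)) * H * Emat z := by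
          rw [mact_mul G H z hh hg, EmulE, add_neg_cancel, Emat_zero, mul_one]
          simp only [Matrix.mul_assoc]
          rfl
      _ = (Emat (-(mact G w)) * G * Emat w) * (Emat (-w) * H * Emat z) := by
          simp only [Matrix.mul_assoc]
      _ = bmat G w * bmat H z := by rw [bmat, bmat]
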